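/- For every integer i ≥ 1, every β ∈ I with β ≠ e, and every word w ∈ List I: fusW e^i (β :: w) = {e^i ++ (β :: w), e^{i−1} ++ (β :: w)}. (Combinatorial form of the identity ω(1^i) ⊗ ω(β,…) = ω(1^i, β,…) ⊕ ω(1^{i−1}, β,…) from the proof of Lemma 3.4(2) of the paper.) -/

import Mathlib

/- Combinatorial model of the Lemeux–Tarrago fusion rules for a free wreath
product 𝔾 ≀* S_N⁺. Words over `I` (a type modeling `Irr 𝔾`) label the
irreducible corepresentations. -/

variable {I : Type*}

/-- The conjugate word `x̄ = (x.map bar).reverse`. -/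
def conjW (bar : I → I) (x : List I) : List I := (x.map bar).reverse

/-- `fusW bar fus x y` is the set of words `z` such that `ω(z)` is a direct
summand of `ω(x) ⊗ ω(y)`: there are `u, t, v` with `x = u ++ t`,
`y = t̄ ++ v` and either `z = u ++ v` (concatenation), or `u ≠ []`, `v ≠ []`
and `z = u.dropLast ++ [γ] ++ v.tail` for some `γ ∈ fus u.getLast v.head`
(fusion). -/
def fusW (bar : I → I) (fus : I → I → Set I) (x y : List I) : Set (List I) :=
  {z | ∃ u t v : List I, x = u ++ t ∧ y = conjW bar t ++ v ∧
    (z = u ++ v ∨ ∃ a b : I, u.getLast? = some a ∧ v.head? = some b ∧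
      ∃ γ ∈ fus a b, z = u.dropLast ++ [γ] ++ v.tail)}

/-- `A ∘ B` for sets of words. -/
def fusSet (bar : I → I) (fus : I → I → Set I) (A B : Set (List I)) :
    Set (List I) :=
  {z | ∃ x ∈ A, ∃ y ∈ B, z ∈ fusW bar fus x y}

/-- `E₁`: words starting with `e`, together with the empty word. -/
def E₁ (e : I) : Set (List I) := {x | x = [] ∨ x.head? = some e}

/-- `E₂`: words all of whose letters equal `e`. -/
def E₂ (e : I) : Set (List I) := {x | ∃ k : ℕ, x = List.replicate k e}

/-- `E₃ = E₁ \ E₂`. -/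
def E₃ (e : I) : Set (List I) := E₁ e \ E₂ e

/-- `S`: words containing at least one letter different from `e`. -/
def Sset (e : I) : Set (List I) := {x | x ∉ E₂ e}

/-- `G₁`: nonempty words starting with a letter different from `e`. -/
def G₁ (e : I) : Set (List I) := {x | x ≠ [] ∧ x.head? ≠ some e}

/-- `G₂`: nonempty words starting and ending with letters different from `e`. -/
def G₂ (e : I) : Set (List I) :=
  {x | x ≠ [] ∧ x.head? ≠ some e ∧ x.getLast? ≠ some e}

theorem stmt9 (bar : I → I) (e : I) (fus : I → I → Set I)
    (hbar : ∀ a : I, bar (bar a) = a) (hbare : bar e = e)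
    (hfus_left : ∀ β : I, fus e β = {β}) (hfus_right : ∀ β : I, fus β e = {β}) :
    ∀ i : ℕ, 1 ≤ i → ∀ β : I, β ≠ e → ∀ w : List I,
      fusW bar fus (List.replicate i e) (β :: w) =
        {List.replicate i e ++ β :: w, List.replicate (i - 1) e ++ β :: w} := by

  intro i hi β hβ w
  obtain ⟨n, rfl⟩ : ∃ n, i = n + 1 := ⟨i - 1, (Nat.succ_pred_eq_of_pos hi).symm⟩
  have hlast : (List.replicate (n+1) e).getLast? = some e := by
    rw [List.replicate_succ', List.getLast?_concat]
  have hdrop : (List.replicate (n+1) e).dropLast = List.replicate n e := by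
    rw [List.replicate_succ', List.dropLast_concat]
  ext z
  simp only [fusW, Set.mem_setOf_eq, Set.mem_insert_iff, Set.mem_singleton_iff]
  constructor
  · rintro ⟨u, t, v, hx, hy, h⟩
    have hu : u = List.replicate u.length e := by
      rw [List.eq_replicate_length]
      intro b hb
      exact List.eq_of_mem_replicate (hx ▸ List.mem_append_left t hb)
    have ht : t = List.replicate t.length e := by
      rw [List.eq_replicate_length]
      intro b hb
      exact List.eq_of_mem_replicate (hx ▸ List.mem_append_right u hb)
    have hct : conjW bar t = List.replicate t.length e := by
      conv_lhs => rw [ht]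
      rw [conjW, List.map_replicate, hbare, List.reverse_replicate]
    rw [hct] at hy
    have ht0 : t.length = 0 := by
      by_contra h0
      obtain ⟨m, hm⟩ : ∃ m, t.length = m + 1 :=
        ⟨t.length - 1, (Nat.succ_pred_eq_of_pos (Nat.pos_of_ne_zero h0)).symm⟩
      rw [hm, List.replicate_succ, List.cons_append] at hy
      injection hy with h1 h2
      exact hβ h1
    rw [ht0, List.replicate, List.nil_append] at hy
    have htnil : t = [] := List.length_eq_zero_iff.mp ht0
    rw [htnil, List.append_nil] at hx
    subst hx
    rcases h with h | ⟨a, b, ha, hb, γ, hγ, hz⟩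
    · exact Or.inl (h.trans (by rw [hy]))
    · right
      rw [hlast] at ha
      rw [← hy] at hb
      obtain rfl : a = e := by injection ha.symm
      have hb' : b = β := by injection hb.symm
      rw [hb', hfus_left] at hγ
      obtain rfl : γ = β := hγ
      rw [hz, hdrop, ← hy]
      simp
  · rintro (rfl | rfl)
    · exact ⟨List.replicate (n+1) e, [], β :: w, by simp, by simp [conjW], Or.inl rfl⟩
    · refine ⟨List.replicate (n+1) e, [], β :: w, by simp, by simp [conjW],
        Or.inr ⟨e, β, hlast, rfl, β, by rw [hfus_left]; rfl, ?_⟩⟩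
      rw [hdrop]
      simp
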